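/- For every k ≥ 1, the k-th power I^k of the ideal I equals the ideal of ℝ[z₁,z₂] generated by the finite set of three-directional box spline symbols I_k = { B#_{β,β,α}, B#_{β,α,β}, B#_{α,β,β} : α = 0, 1, …, ⌊k/2⌋, β = k − α }. -/
import Mathlib


open MvPolynomial

/-- The ideal of bivariate real polynomials vanishing at the three points
`(−1,−1), (−1,1), (1,−1)`. -/
noncomputable def vI : Ideal (MvPolynomial (Fin 2) ℝ) where
  carrier := {p | ∀ ε ∈ ({![-1, -1], ![-1, 1], ![1, -1]} : Set (Fin 2 → ℝ)), eval ε p = 0}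
  zero_mem' := by intro ε _; simp
  add_mem' := by intro a b ha hb ε hε; simp [ha ε hε, hb ε hε]
  smul_mem' := by intro c p hp ε hε; simp [smul_eq_mul, hp ε hε]

/-- The normalized three-directional box spline symbol
`B#_{α,β,γ}(z₁,z₂) = ((1+z₁)/2)^α ((1+z₂)/2)^β ((1+z₁z₂)/2)^γ`. -/
noncomputable def Bs (α β γ : ℕ) : MvPolynomial (Fin 2) ℝ :=
  (C (1 / 2 : ℝ) * (1 + X 0)) ^ α * (C (1 / 2 : ℝ) * (1 + X 1)) ^ β *
    (C (1 / 2 : ℝ) * (1 + X 0 * X 1)) ^ γ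

/-- The generating set `I_k = { B#_{β,β,α}, B#_{β,α,β}, B#_{α,β,β} :
α = 0,…,⌊k/2⌋, β = k − α }`. -/
def Iset (k : ℕ) : Set (MvPolynomial (Fin 2) ℝ) :=
  {q | ∃ α : ℕ, α ≤ k / 2 ∧
    (q = Bs (k - α) (k - α) α ∨ q = Bs (k - α) α (k - α) ∨ q = Bs α (k - α) (k - α))}

/- ### Auxiliary definitions and lemmas -/

noncomputable def pa : MvPolynomial (Fin 2) ℝ := C (1 / 2 : ℝ) * (1 + X 0)
noncomputable def pb : MvPolynomial (Fin 2) ℝ := C (1 / 2 : ℝ) * (1 + X 1)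
noncomputable def pc : MvPolynomial (Fin 2) ℝ := C (1 / 2 : ℝ) * (1 + X 0 * X 1)

noncomputable def Jid : Ideal (MvPolynomial (Fin 2) ℝ) :=
  Ideal.span {pa * pb, pa * pc, pb * pc}

lemma Bs_eq (α β γ : ℕ) : Bs α β γ = pa ^ α * pb ^ β * pc ^ γ := rfl

lemma hab : pa * pb ∈ Jid := Ideal.subset_span (by left; rfl)
lemma hac : pa * pc ∈ Jid := Ideal.subset_span (by right; left; rfl)
lemma hbc : pb * pc ∈ Jid := Ideal.subset_span (by right; right; rfl)

lemma mem_vI_iff (p : MvPolynomial (Fin 2) ℝ) :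
    p ∈ vI ↔ ∀ ε ∈ ({![-1, -1], ![-1, 1], ![1, -1]} : Set (Fin 2 → ℝ)), eval ε p = 0 :=
  Iff.rfl

lemma JleI : Jid ≤ vI := by
  rw [Jid, Ideal.span_le]
  intro q hq ε hε
  simp only [Set.mem_insert_iff, Set.mem_singleton_iff] at hq hε
  rcases hq with rfl | rfl | rfl <;> rcases hε with rfl | rfl | rfl <;>
    simp [pa, pb, pc] <;> norm_num

lemma e1 : (X 0 * X 0 - 1 : MvPolynomial (Fin 2) ℝ) ∈ Jid := by
  have h : (X 0 * X 0 - 1 : MvPolynomial (Fin 2) ℝ)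
      = (8 * pa - 4) * (pa * pb) + (-4) * (pa * pc) := by
    apply MvPolynomial.funext
    intro x
    simp [pa, pb, pc]
    ring
  rw [h]
  exact add_mem (Ideal.mul_mem_left _ _ hab) (Ideal.mul_mem_left _ _ hac)

lemma e2 : (X 1 * X 1 - 1 : MvPolynomial (Fin 2) ℝ) ∈ Jid := by
  have h : (X 1 * X 1 - 1 : MvPolynomial (Fin 2) ℝ)
      = (8 * pb - 4) * (pa * pb) + (-4) * (pb * pc) := by
    apply MvPolynomial.funext
    intro x
    simp [pa, pb, pc]
    ring
  rw [h]
  exact add_mem (Ideal.mul_mem_left _ _ hab) (Ideal.mul_mem_left _ _ hbc)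

lemma e3 : (X 0 * X 1 + 1 + X 0 + X 1 : MvPolynomial (Fin 2) ℝ) ∈ Jid := by
  have h : (X 0 * X 1 + 1 + X 0 + X 1 : MvPolynomial (Fin 2) ℝ) = 4 * (pa * pb) := by
    apply MvPolynomial.funext
    intro x
    simp [pa, pb]
    ring
  rw [h]
  exact Ideal.mul_mem_left _ _ hab

lemma red (p : MvPolynomial (Fin 2) ℝ) :
    ∃ c₀ c₁ c₂ : ℝ, p - (C c₀ + C c₁ * X 0 + C c₂ * X 1) ∈ Jid := by
  induction p using MvPolynomial.induction_on with
  | C a =>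
      refine ⟨a, 0, 0, ?_⟩
      simpa using zero_mem Jid
  | add p q hp hq =>
      obtain ⟨c₀, c₁, c₂, hp⟩ := hp
      obtain ⟨d₀, d₁, d₂, hq⟩ := hq
      refine ⟨c₀ + d₀, c₁ + d₁, c₂ + d₂, ?_⟩
      have h : p + q - (C (c₀ + d₀) + C (c₁ + d₁) * X 0 + C (c₂ + d₂) * X 1)
          = (p - (C c₀ + C c₁ * X 0 + C c₂ * X 1))
            + (q - (C d₀ + C d₁ * X 0 + C d₂ * X 1)) := by
        rw [map_add, map_add, map_add]; ring
      rw [h]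
      exact add_mem hp hq
  | mul_X p n hp =>
      obtain ⟨c₀, c₁, c₂, hp⟩ := hp
      fin_cases n
      · refine ⟨c₁ - c₂, c₀ - c₂, -c₂, ?_⟩
        show p * X 0 - (C (c₁ - c₂) + C (c₀ - c₂) * X 0 + C (-c₂) * X 1) ∈ Jid
        have h : p * X 0 - (C (c₁ - c₂) + C (c₀ - c₂) * X 0 + C (-c₂) * X 1)
            = (p - (C c₀ + C c₁ * X 0 + C c₂ * X 1)) * X 0
              + C c₁ * (X 0 * X 0 - 1) + C c₂ * (X 0 * X 1 + 1 + X 0 + X 1) := by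
          rw [map_sub, map_sub, map_neg]; ring
        rw [h]
        exact add_mem (add_mem (Ideal.mul_mem_right _ _ hp) (Ideal.mul_mem_left _ _ e1))
          (Ideal.mul_mem_left _ _ e3)
      · refine ⟨c₂ - c₁, -c₁, c₀ - c₁, ?_⟩
        show p * X 1 - (C (c₂ - c₁) + C (-c₁) * X 0 + C (c₀ - c₁) * X 1) ∈ Jid
        have h : p * X 1 - (C (c₂ - c₁) + C (-c₁) * X 0 + C (c₀ - c₁) * X 1)
            = (p - (C c₀ + C c₁ * X 0 + C c₂ * X 1)) * X 1
              + C c₂ * (X 1 * X 1 - 1) + C c₁ * (X 0 * X 1 + 1 + X 0 + X 1) := by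
          rw [map_sub, map_sub, map_neg]; ring
        rw [h]
        exact add_mem (add_mem (Ideal.mul_mem_right _ _ hp) (Ideal.mul_mem_left _ _ e2))
          (Ideal.mul_mem_left _ _ e3)

lemma IleJ : vI ≤ Jid := by
  intro p hp
  obtain ⟨c₀, c₁, c₂, hm⟩ := red p
  have hdiff := JleI hm
  have key : ∀ ε ∈ ({![-1, -1], ![-1, 1], ![1, -1]} : Set (Fin 2 → ℝ)),
      eval ε (C c₀ + C c₁ * X 0 + C c₂ * X 1 : MvPolynomial (Fin 2) ℝ) = 0 := by
    intro ε hε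
    have h1 : eval ε p = 0 := hp ε hε
    have h2 : eval ε (p - (C c₀ + C c₁ * X 0 + C c₂ * X 1)) = 0 := hdiff ε hε
    rw [map_sub, h1] at h2
    linarith
  have k1 := key ![-1, -1] (by left; rfl)
  have k2 := key ![-1, 1] (by right; left; rfl)
  have k3 := key ![1, -1] (by right; right; rfl)
  simp at k1 k2 k3
  have hc0 : c₀ = 0 := by linarith
  have hc1 : c₁ = 0 := by linarith
  have hc2 : c₂ = 0 := by linarith
  rw [hc0, hc1, hc2] at hm
  simpa using hm

lemma vI_eq_J : vI = Jid := le_antisymm IleJ JleI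

lemma habc : pa * pb * pc ∈ Jid ^ 2 := by
  have h : pa * pb * pc
      = (pa * pb) * (pa * pc) + (pa * pb) * (pb * pc) + (pa * pc) * (pb * pc)
        - ((2 * pc) * (pa * pb)) * (pa * pb) := by
    apply MvPolynomial.funext
    intro x
    simp [pa, pb, pc]
    ring
  rw [h, sq]
  exact sub_mem
    (add_mem (add_mem (Ideal.mul_mem_mul hab hac) (Ideal.mul_mem_mul hab hbc))
      (Ideal.mul_mem_mul hac hbc))
    (Ideal.mul_mem_mul (Ideal.mul_mem_left _ _ hab) hab)

lemma MleJpow (k : ℕ) : Ideal.span (Iset k) ≤ Jid ^ k := by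
  rw [Ideal.span_le]
  rintro q ⟨α, hα, hq⟩
  have h2α : 2 * α ≤ k := by omega
  obtain ⟨e, he⟩ : ∃ e, k = e + 2 * α := ⟨k - 2 * α, by omega⟩
  have hka : k - α = e + α := by omega
  have hpow : Jid ^ k = Jid ^ e * (Jid ^ 2) ^ α := by
    rw [he, pow_add, pow_mul]
  rcases hq with rfl | rfl | rfl
  · have hBs : Bs (k - α) (k - α) α = (pa * pb) ^ e * (pa * pb * pc) ^ α := by
      rw [Bs_eq, hka]; ring
    rw [hBs, hpow]
    exact Ideal.mul_mem_mul (Ideal.pow_mem_pow hab e) (Ideal.pow_mem_pow habc α)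
  · have hBs : Bs (k - α) α (k - α) = (pa * pc) ^ e * (pa * pb * pc) ^ α := by
      rw [Bs_eq, hka]; ring
    rw [hBs, hpow]
    exact Ideal.mul_mem_mul (Ideal.pow_mem_pow hac e) (Ideal.pow_mem_pow habc α)
  · have hBs : Bs α (k - α) (k - α) = (pb * pc) ^ e * (pa * pb * pc) ^ α := by
      rw [Bs_eq, hka]; ring
    rw [hBs, hpow]
    exact Ideal.mul_mem_mul (Ideal.pow_mem_pow hbc e) (Ideal.pow_mem_pow habc α)

lemma cover (k A B D : ℕ) (hAB : k ≤ A + B) (hAD : k ≤ A + D) (hBD : k ≤ B + D) :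
    pa ^ A * pb ^ B * pc ^ D ∈ Ideal.span (Iset k) := by
  have h3 : (D ≤ A ∧ D ≤ B) ∨ (B ≤ A ∧ B ≤ D) ∨ (A ≤ B ∧ A ≤ D) := by omega
  rcases h3 with ⟨h1, h2⟩ | ⟨h1, h2⟩ | ⟨h1, h2⟩
  · set α := k - min A B with hα
    have hg : Bs (k - α) (k - α) α ∈ Iset k := ⟨α, by omega, Or.inl rfl⟩
    obtain ⟨a, ha⟩ : ∃ a, A = (k - α) + a := ⟨A - (k - α), by omega⟩
    obtain ⟨b, hb⟩ : ∃ b, B = (k - α) + b := ⟨B - (k - α), by omega⟩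
    obtain ⟨d, hd⟩ : ∃ d, D = α + d := ⟨D - α, by omega⟩
    have heq : pa ^ A * pb ^ B * pc ^ D
        = (pa ^ a * pb ^ b * pc ^ d) * Bs (k - α) (k - α) α := by
      rw [ha, hb, hd, Bs_eq]; ring
    rw [heq]
    exact Ideal.mul_mem_left _ _ (Ideal.subset_span hg)
  · set α := k - min A D with hα
    have hg : Bs (k - α) α (k - α) ∈ Iset k := ⟨α, by omega, Or.inr (Or.inl rfl)⟩
    obtain ⟨a, ha⟩ : ∃ a, A = (k - α) + a := ⟨A - (k - α), by omega⟩
    obtain ⟨b, hb⟩ : ∃ b, B = α + b := ⟨B - α, by omega⟩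
    obtain ⟨d, hd⟩ : ∃ d, D = (k - α) + d := ⟨D - (k - α), by omega⟩
    have heq : pa ^ A * pb ^ B * pc ^ D
        = (pa ^ a * pb ^ b * pc ^ d) * Bs (k - α) α (k - α) := by
      rw [ha, hb, hd, Bs_eq]; ring
    rw [heq]
    exact Ideal.mul_mem_left _ _ (Ideal.subset_span hg)
  · set α := k - min B D with hα
    have hg : Bs α (k - α) (k - α) ∈ Iset k := ⟨α, by omega, Or.inr (Or.inr rfl)⟩
    obtain ⟨a, ha⟩ : ∃ a, A = α + a := ⟨A - α, by omega⟩
    obtain ⟨b, hb⟩ : ∃ b, B = (k - α) + b := ⟨B - (k - α), by omega⟩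
    obtain ⟨d, hd⟩ : ∃ d, D = (k - α) + d := ⟨D - (k - α), by omega⟩
    have heq : pa ^ A * pb ^ B * pc ^ D
        = (pa ^ a * pb ^ b * pc ^ d) * Bs α (k - α) (k - α) := by
      rw [ha, hb, hd, Bs_eq]; ring
    rw [heq]
    exact Ideal.mul_mem_left _ _ (Ideal.subset_span hg)

lemma JpowLe (k : ℕ) : Jid ^ k ≤ Ideal.span (Iset k) := by
  induction k with
  | zero =>
      rw [pow_zero, Ideal.one_eq_top]
      have h1 : (1 : MvPolynomial (Fin 2) ℝ) ∈ Ideal.span (Iset 0) := by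
        apply Ideal.subset_span
        refine ⟨0, le_refl _, Or.inl ?_⟩
        simp [Bs_eq]
      have htop : Ideal.span (Iset 0) = ⊤ := (Ideal.eq_top_iff_one _).mpr h1
      rw [htop]
  | succ k ih =>
      have hstep : Jid ^ (k + 1) ≤ Ideal.span (Iset k) * Jid := by
        rw [pow_succ]
        exact Ideal.mul_mono_left ih
      refine le_trans hstep ?_
      rw [Iset, Jid, Ideal.span_mul_span', Ideal.span_le]
      rintro x hx
      rw [Set.mem_mul] at hx
      obtain ⟨q, hq, r, hr, rfl⟩ := hx
      obtain ⟨α, hα, hq⟩ := hq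
      simp only [Set.mem_insert_iff, Set.mem_singleton_iff] at hr
      have h2α : 2 * α ≤ k := by omega
      rcases hq with rfl | rfl | rfl <;> rcases hr with rfl | rfl | rfl
      · have h : Bs (k - α) (k - α) α * (pa * pb)
            = pa ^ (k - α + 1) * pb ^ (k - α + 1) * pc ^ α := by rw [Bs_eq]; ring
        rw [h]; exact cover _ _ _ _ (by omega) (by omega) (by omega)
      · have h : Bs (k - α) (k - α) α * (pa * pc)
            = pa ^ (k - α + 1) * pb ^ (k - α) * pc ^ (α + 1) := by rw [Bs_eq]; ring
        rw [h]; exact cover _ _ _ _ (by omega) (by omega) (by omega)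
      · have h : Bs (k - α) (k - α) α * (pb * pc)
            = pa ^ (k - α) * pb ^ (k - α + 1) * pc ^ (α + 1) := by rw [Bs_eq]; ring
        rw [h]; exact cover _ _ _ _ (by omega) (by omega) (by omega)
      · have h : Bs (k - α) α (k - α) * (pa * pb)
            = pa ^ (k - α + 1) * pb ^ (α + 1) * pc ^ (k - α) := by rw [Bs_eq]; ring
        rw [h]; exact cover _ _ _ _ (by omega) (by omega) (by omega)
      · have h : Bs (k - α) α (k - α) * (pa * pc)
            = pa ^ (k - α + 1) * pb ^ α * pc ^ (k - α + 1) := by rw [Bs_eq]; ring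
        rw [h]; exact cover _ _ _ _ (by omega) (by omega) (by omega)
      · have h : Bs (k - α) α (k - α) * (pb * pc)
            = pa ^ (k - α) * pb ^ (α + 1) * pc ^ (k - α + 1) := by rw [Bs_eq]; ring
        rw [h]; exact cover _ _ _ _ (by omega) (by omega) (by omega)
      · have h : Bs α (k - α) (k - α) * (pa * pb)
            = pa ^ (α + 1) * pb ^ (k - α + 1) * pc ^ (k - α) := by rw [Bs_eq]; ring
        rw [h]; exact cover _ _ _ _ (by omega) (by omega) (by omega)
      · have h : Bs α (k - α) (k - α) * (pa * pc)
            = pa ^ (α + 1) * pb ^ (k - α) * pc ^ (k - α + 1) := by rw [Bs_eq]; ring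
        rw [h]; exact cover _ _ _ _ (by omega) (by omega) (by omega)
      · have h : Bs α (k - α) (k - α) * (pb * pc)
            = pa ^ α * pb ^ (k - α + 1) * pc ^ (k - α + 1) := by rw [Bs_eq]; ring
        rw [h]; exact cover _ _ _ _ (by omega) (by omega) (by omega)

/-- For every `k ≥ 1`, the `k`-th power of the vanishing ideal `I` is generated by the set
`I_k` of three-directional box spline symbols. -/
theorem stmt_11 (k : ℕ) (hk : 1 ≤ k) : vI ^ k = Ideal.span (Iset k) := by
  rw [vI_eq_J]
  exact le_antisymm (JpowLe k) (MleJpow k)
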